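/- Let x > 0 and define the signed measures μ_n := δ_x − δ_{x+1/n} on [0,∞) and μ := 0. Then (i) Ψ_{μ_n}(λ) → 0 = Ψ_μ(λ) for all λ > 0; (ii) limsup_n Ψ_{|μ_n|}(λ) = 2e^{−λx} < ∞ for all λ > 0; (iii) x is a continuity point of μ; but (iv) F_{μ_n}(x) = 1 for all n, so F_{μ_n}(x) does not converge to F_μ(x) = 0. Moreover {μ_n} is not right-equicontinuous at x: for any δ > 0 and n ≥ 1/δ, |μ_n((x, x+δ])| = 1. -/

import Mathlib

open MeasureTheory Filter Topology Set
open scoped NNReal ENNReal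

lemma integrable_dirac' {α} [MeasurableSpace α] [MeasurableSingletonClass α] {f : α → ℝ}
    (hf : Measurable f) (a : α) : MeasureTheory.Integrable f (Measure.dirac a) := by
  refine ⟨hf.aestronglyMeasurable, ?_⟩
  simp [HasFiniteIntegral, lintegral_dirac]

/-- for `x > 0` and `μ_n := δ_x - δ_{x+1/n}`, `μ := 0`:
(i) `Ψ_{μ_n}(λ) → 0 = Ψ_μ(λ)`; (ii) `limsup_n Ψ_{|μ_n|}(λ) = 2 e^{-λx}`;
(iii) `x` is a continuity point of `μ = 0`; but (iv) `F_{μ_n}(x) = 1` for `n ≥ 1`, so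
`F_{μ_n}(x) ↛ 0 = F_μ(x)`; moreover `{μ_n}` is not right-equicontinuous at `x`:
`|μ_n((x, x+δ])| = 1` whenever `n ≥ 1/δ`. -/
theorem dirac_counterexample (x : ℝ≥0) (hx : 0 < x) :
    (∀ l : ℝ, 0 < l →
      Tendsto (fun n : ℕ =>
          (∫ y, Real.exp (-(l * (y : ℝ))) ∂(Measure.dirac x)) -
            ∫ y, Real.exp (-(l * (y : ℝ))) ∂(Measure.dirac (x + (n : ℝ≥0)⁻¹)))
        atTop (𝓝 0)) ∧
    (∀ l : ℝ, 0 < l →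
      Filter.limsup (fun n : ℕ =>
          ∫ y, Real.exp (-(l * (y : ℝ)))
            ∂(Measure.dirac x + Measure.dirac (x + (n : ℝ≥0)⁻¹)))
        atTop = 2 * Real.exp (-(l * (x : ℝ)))) ∧
    ((0 : Measure ℝ≥0) {x} = 0) ∧
    (∀ n : ℕ, 1 ≤ n →
      ((Measure.dirac x) (Set.Iic x)).toReal -
        ((Measure.dirac (x + (n : ℝ≥0)⁻¹)) (Set.Iic x)).toReal = 1) ∧
    ¬ Tendsto (fun n : ℕ =>
        ((Measure.dirac x) (Set.Iic x)).toReal -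
          ((Measure.dirac (x + (n : ℝ≥0)⁻¹)) (Set.Iic x)).toReal) atTop (𝓝 0) ∧
    (∀ δ : ℝ≥0, 0 < δ → ∀ n : ℕ, 1 / (δ : ℝ) ≤ (n : ℝ) →
      |((Measure.dirac x) (Set.Ioc x (x + δ))).toReal -
        ((Measure.dirac (x + (n : ℝ≥0)⁻¹)) (Set.Ioc x (x + δ))).toReal| = 1) := by
  have hmeas : ∀ l : ℝ, Measurable (fun y : ℝ≥0 => Real.exp (-(l * (y : ℝ)))) := by
    intro l; fun_prop
  have hinv : Tendsto (fun n : ℕ => ((n : ℝ≥0)⁻¹ : ℝ)) atTop (𝓝 0) := by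
    simp only [NNReal.coe_inv, NNReal.coe_natCast]
    exact tendsto_inv_atTop_zero.comp tendsto_natCast_atTop_atTop
  have hcoe : ∀ n : ℕ, ((x + (n : ℝ≥0)⁻¹ : ℝ≥0) : ℝ) = (x : ℝ) + ((n : ℝ≥0)⁻¹ : ℝ) := by
    intro n; push_cast; ring
  have hF : ∀ n : ℕ, 1 ≤ n →
      ((Measure.dirac x) (Set.Iic x)).toReal -
        ((Measure.dirac (x + (n : ℝ≥0)⁻¹)) (Set.Iic x)).toReal = 1 := by
    intro n hn
    have h1 : (Measure.dirac x) (Set.Iic x) = 1 := by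
      rw [Measure.dirac_apply]
      simp
    have hnpos : (0 : ℝ≥0) < (n : ℝ≥0)⁻¹ := by
      have h0 : ((n : ℝ≥0)) ≠ 0 := by exact_mod_cast Nat.one_le_iff_ne_zero.mp hn
      positivity
    have hmem : x + (n : ℝ≥0)⁻¹ ∉ Set.Iic x := by
      simp only [Set.mem_Iic, not_le]
      exact lt_add_of_pos_right x hnpos
    have h2 : (Measure.dirac (x + (n : ℝ≥0)⁻¹)) (Set.Iic x) = 0 := by
      rw [Measure.dirac_apply, Set.indicator_of_notMem hmem]
    rw [h1, h2]
    simp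
  refine ⟨?_, ?_, by simp, hF, ?_, ?_⟩
  · -- (i)
    intro l hl
    simp only [integral_dirac]
    have hc : Continuous (fun t : ℝ =>
        Real.exp (-(l * (x : ℝ))) - Real.exp (-(l * ((x : ℝ) + t)))) := by fun_prop
    have := (hc.tendsto 0).comp hinv
    simp only [Function.comp_def, add_zero, sub_self] at this
    refine this.congr fun n => ?_
    rw [hcoe n]
  · -- (ii)
    intro l hl
    have hint : ∀ a : ℝ≥0, Integrable (fun y : ℝ≥0 => Real.exp (-(l * (y : ℝ))))
        (Measure.dirac a) := fun a => integrable_dirac' (hmeas l) a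
    have heq : ∀ n : ℕ, (∫ y, Real.exp (-(l * (y : ℝ)))
        ∂(Measure.dirac x + Measure.dirac (x + (n : ℝ≥0)⁻¹)))
        = Real.exp (-(l * (x : ℝ))) + Real.exp (-(l * ((x : ℝ) + ((n : ℝ≥0)⁻¹ : ℝ)))) := by
      intro n
      rw [integral_add_measure (hint _) (hint _), integral_dirac, integral_dirac, hcoe n]
    have hc : Continuous (fun t : ℝ =>
        Real.exp (-(l * (x : ℝ))) + Real.exp (-(l * ((x : ℝ) + t)))) := by fun_prop
    have htend := (hc.tendsto 0).comp hinv
    simp only [Function.comp_def, add_zero] at htend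
    have htend2 : Tendsto (fun n : ℕ =>
        ∫ y, Real.exp (-(l * (y : ℝ)))
          ∂(Measure.dirac x + Measure.dirac (x + (n : ℝ≥0)⁻¹))) atTop
        (𝓝 (2 * Real.exp (-(l * (x : ℝ))))) := by
      have : Real.exp (-(l * (x : ℝ))) + Real.exp (-(l * (x : ℝ)))
          = 2 * Real.exp (-(l * (x : ℝ))) := by ring
      rw [← this]
      exact htend.congr (fun n => (heq n).symm)
    exact htend2.limsup_eq
  · -- (v)
    intro h
    have h1 : Tendsto (fun _ : ℕ => (1 : ℝ)) atTop (𝓝 0) := by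
      refine h.congr' ?_
      filter_upwards [eventually_ge_atTop 1] with n hn
      exact hF n hn
    have := tendsto_nhds_unique h1 tendsto_const_nhds
    norm_num at this
  · -- (vi)
    intro δ hδ n hn
    have hδ' : (0 : ℝ) < (δ : ℝ) := hδ
    have hnpos : (0 : ℝ) < (n : ℝ) := lt_of_lt_of_le (by positivity) hn
    have hle : ((n : ℝ) )⁻¹ ≤ (δ : ℝ) := by
      rw [inv_le_comm₀ hnpos hδ']
      calc (δ : ℝ)⁻¹ = 1 / (δ : ℝ) := by rw [one_div]
        _ ≤ n := hn
    have hle' : (n : ℝ≥0)⁻¹ ≤ δ := by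
      rw [← NNReal.coe_le_coe, NNReal.coe_inv, NNReal.coe_natCast]
      exact hle
    have hnpos' : (0 : ℝ≥0) < (n : ℝ≥0)⁻¹ := by
      rw [← NNReal.coe_lt_coe, NNReal.coe_inv, NNReal.coe_natCast]
      positivity
    have h1 : (Measure.dirac x) (Set.Ioc x (x + δ)) = 0 := by
      rw [Measure.dirac_apply, Set.indicator_of_notMem (by simp)]
    have h2 : (Measure.dirac (x + (n : ℝ≥0)⁻¹)) (Set.Ioc x (x + δ)) = 1 := by
      have hmem : x + (n : ℝ≥0)⁻¹ ∈ Set.Ioc x (x + δ) :=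
        ⟨lt_add_of_pos_right x hnpos', add_le_add_right hle' x⟩
      rw [Measure.dirac_apply, Set.indicator_of_mem hmem]
      rfl
    rw [h1, h2]
    simp
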